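/- If C is a class of morphisms in a cocomplete category K containing all isomorphisms and closed under pushout and transfinite composition, then the class of retracts of morphisms of C is closed under composition: if f₀: A₀ → A₁ and f₁: A₁ → A₂ are both retracts of morphisms in C, then f₁ ∘ f₀ is a retract of a morphism in C. -/

import Mathlib

open CategoryTheory Category Limits Opposite

universe w v u u' u''

namespace CellularPaper

variable {K : Type u} [Category.{v} K]

/-- The restriction of a chain `F : J ⥤ K` to the elements below `j`. -/
def restrictionLT {J : Type w} [Preorder J] (F : J ⥤ K) (j : J) :
    {i : J // i < j} ⥤ K :=
  (Monotone.functor (f := fun i : {i : J // i < j} => (i : J)) fun _ _ h => h) ⋙ F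

/-- The cocone on the restriction of `F` below `j` with apex `F.obj j`. -/
@[simps]
def coconeLT {J : Type w} [Preorder J] (F : J ⥤ K) (j : J) :
    Cocone (restrictionLT F j) where
  pt := F.obj j
  ι :=
    { app := fun i => F.map (homOfLE i.2.le)
      naturality := fun i i' h => by
        dsimp [restrictionLT, Monotone.functor]
        rw [← F.map_comp]
        simp }

/-- `f` is a transfinite composite of a smooth chain with links in `C`. -/
def IsTransfiniteCompositionOf (C : MorphismProperty K) : MorphismProperty K :=
  fun A B f =>
    ∃ (J : Type w) (_ : LinearOrder J) (_ : SuccOrder J) (_ : OrderBot J)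
      (_ : WellFoundedLT J) (F : J ⥤ K) (c : Cocone F) (_ : IsColimit c)
      (eA : A ≅ F.obj ⊥) (eB : c.pt ≅ B),
      (∀ j : J, ¬IsMax j → C (F.map (homOfLE (Order.le_succ j)))) ∧
      (∀ j : J, Order.IsSuccLimit j → Nonempty (IsColimit (coconeLT F j))) ∧
      eA.hom ≫ c.ι.app ⊥ ≫ eB.hom = f

/-- A cellular structure: a class of morphisms containing all isomorphisms and closed
under pushout and transfinite composition. -/
structure IsCellular (C : MorphismProperty K) : Prop where
  isos : ∀ {A B : K} (f : A ⟶ B), IsIso f → C f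
  pushout : ∀ {A B A' B' : K} {f : A ⟶ B} {u : A ⟶ A'} {v : B ⟶ B'} {g : A' ⟶ B'},
    IsPushout f u v g → C f → C g
  transfinite : ∀ {A B : K} (f : A ⟶ B), IsTransfiniteCompositionOf.{v} C f → C f

/-- `f` is a retract of `g` in the arrow category. -/
def IsRetractOf {A B X Y : K} (f : A ⟶ B) (g : X ⟶ Y) : Prop :=
  ∃ (u : A ⟶ X) (v : B ⟶ Y) (r : X ⟶ A) (s : Y ⟶ B),
    u ≫ g = f ≫ v ∧ r ≫ f = g ≫ s ∧ u ≫ r = 𝟙 A ∧ v ≫ s = 𝟙 B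

/-- The class of retracts of morphisms in `C`. -/
def retracts (C : MorphismProperty K) : MorphismProperty K :=
  fun _ _ f => ∃ (X Y : K) (g : X ⟶ Y), C g ∧ IsRetractOf f g

/-- The class of pushouts of morphisms in `C`. -/
def Po (C : MorphismProperty K) : MorphismProperty K :=
  fun A' B' g => ∃ (A B : K) (f : A ⟶ B) (u : A ⟶ A') (v : B ⟶ B'),
    C f ∧ IsPushout f u v g

/-- A κ-directed preorder. -/
def IsCardinalDirected (P : Type v) [Preorder P] (κ : Cardinal.{v}) : Prop :=
  ∀ S : Set P, Cardinal.mk S < κ → ∃ p : P, ∀ s ∈ S, s ≤ p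

/-- A κ-presentable object: its hom-functor preserves κ-directed colimits. -/
def IsCardinalPresentable (κ : Cardinal.{v}) (A : K) : Prop :=
  ∀ (P : Type v) (_ : Preorder P), IsCardinalDirected P κ →
    Nonempty (PreservesColimitsOfShape P (coyoneda.obj (op A)))

/-- A locally κ-presentable category. -/
structure IsLocallyPresentable (κ : Cardinal.{v}) (K : Type u) [Category.{v} K] : Prop where
  regular : κ.IsRegular
  hasColimits : HasColimits K
  generators : ∃ (ι : Type v) (G : ι → K), (∀ i, IsCardinalPresentable κ (G i)) ∧
    ∀ X : K, ∃ (P : Type v) (_ : Preorder P) (F : P ⥤ K) (c : Cocone F) (_ : IsColimit c),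
      IsCardinalDirected P κ ∧ Nonempty (c.pt ≅ X) ∧ ∀ p : P, ∃ i, Nonempty (F.obj p ≅ G i)

/-- A locally presentable category. -/
def LocallyPresentable (K : Type u) [Category.{v} K] : Prop :=
  ∃ κ : Cardinal.{v}, IsLocallyPresentable κ K

/-- The smallest cellular class containing `X`. -/
def cellClosure (X : MorphismProperty K) : MorphismProperty K :=
  fun _ _ f => ∀ C : MorphismProperty K, IsCellular C → X ≤ C → C f

/-- `cof(X)`: retracts of transfinite composites of pushouts of `X`. -/
def cofClosure (X : MorphismProperty K) : MorphismProperty K :=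
  retracts (IsTransfiniteCompositionOf.{v} (Po X))

/-- The morphism property generated by a family of morphisms. -/
def ofFamily {ι : Type*} {a b : ι → K} (s : ∀ i, a i ⟶ b i) : MorphismProperty K :=
  fun _ _ f => ∃ i, Nonempty (Arrow.mk f ≅ Arrow.mk (s i))

/-- `C` is cofibrantly generated by a set of morphisms. -/
def IsCofibrantlyGenerated (C : MorphismProperty K) : Prop :=
  ∃ (ι : Type v) (a b : ι → K) (s : ∀ i, a i ⟶ b i),
    C = cofClosure (ofFamily s)

/-- A combinatorial structure on a locally presentable category. -/
structure IsCombinatorial (K : Type u) [Category.{v} K] (C : MorphismProperty K) : Prop where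
  locallyPresentable : LocallyPresentable K
  cellular : IsCellular C
  retractClosed : retracts C ≤ C
  cofibrantlyGenerated : IsCofibrantlyGenerated C

/-- `f` is a transfinite composite of length `< κ` of morphisms in `C`. -/
def IsBoundedTransfiniteCompositionOf (κ : Cardinal.{v}) (C : MorphismProperty K) :
    MorphismProperty K :=
  fun A B f =>
    ∃ (J : Type v) (_ : LinearOrder J) (_ : SuccOrder J) (_ : OrderBot J)
      (_ : WellFoundedLT J), Cardinal.mk J < κ ∧
      ∃ (F : J ⥤ K) (c : Cocone F) (_ : IsColimit c)
        (eA : A ≅ F.obj ⊥) (eB : c.pt ≅ B),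
        (∀ j : J, ¬IsMax j → C (F.map (homOfLE (Order.le_succ j)))) ∧
        (∀ j : J, Order.IsSuccLimit j → Nonempty (IsColimit (coconeLT F j))) ∧
        eA.hom ≫ c.ι.app ⊥ ≫ eB.hom = f

/-- The morphisms of `C` with κ-presentable domain and codomain. -/
def betweenPresentable (κ : Cardinal.{v}) (C : MorphismProperty K) : MorphismProperty K :=
  fun A B f => C f ∧ IsCardinalPresentable κ A ∧ IsCardinalPresentable κ B

/-- `Po_κ(X)`: pushouts of morphisms of `X` between κ-presentable objects. -/
def PoCard (κ : Cardinal.{v}) (X : MorphismProperty K) : MorphismProperty K :=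
  betweenPresentable κ (Po X)

/-- The category `psh(K²)`: objects are morphisms of `K`, morphisms are pushout squares. -/
structure PshArrow (K : Type u) [Category.{v} K] : Type max u v where
  arr : Arrow K

instance : Category.{v} (PshArrow K) where
  Hom g f := {φ : g.arr ⟶ f.arr // IsPushout g.arr.hom φ.left φ.right f.arr.hom}
  id g := ⟨𝟙 _, IsPushout.of_vert_isIso ⟨by simp⟩⟩
  comp φ ψ := ⟨φ.1 ≫ ψ.1, φ.2.paste_vert ψ.2⟩
  id_comp φ := Subtype.ext (Category.id_comp _)
  comp_id φ := Subtype.ext (Category.comp_id _)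
  assoc _ _ _ := Subtype.ext (Category.assoc _ _ _)


section PsPull

variable {K : Type u} {L : Type u'} {M : Type u''}
variable [Category.{v} K] [Category.{v} L] [Category.{v} M]

/-- The pseudopullback of `F : K ⥤ M` and `G : L ⥤ M`. -/
structure PsPull (F : K ⥤ M) (G : L ⥤ M) : Type max u u' v where
  k : K
  l : L
  t : F.obj k ≅ G.obj l

variable {F : K ⥤ M} {G : L ⥤ M}

/-- Morphisms in the pseudopullback. -/
@[ext]
structure PsHom (a b : PsPull F G) : Type v where
  hk : a.k ⟶ b.k
  hl : a.l ⟶ b.l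
  w : F.map hk ≫ b.t.hom = a.t.hom ≫ G.map hl

instance : Category.{v} (PsPull F G) where
  Hom := PsHom
  id a := ⟨𝟙 _, 𝟙 _, by simp⟩
  comp f g := ⟨f.hk ≫ g.hk, f.hl ≫ g.hl, by
    rw [F.map_comp, G.map_comp, Category.assoc, g.w, ← Category.assoc, f.w,
      Category.assoc]⟩

/-- The first projection of the pseudopullback. -/
def projK (F : K ⥤ M) (G : L ⥤ M) : PsPull F G ⥤ K where
  obj a := a.k
  map f := f.hk

/-- The second projection of the pseudopullback. -/
def projL (F : K ⥤ M) (G : L ⥤ M) : PsPull F G ⥤ L where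
  obj a := a.l
  map f := f.hl

/-- `Ps(C, D)`: morphisms of the pseudopullback whose projections lie in `C` and `D`. -/
def PsClass (C : MorphismProperty K) (D : MorphismProperty L) :
    MorphismProperty (PsPull F G) :=
  fun _ _ f => C f.hk ∧ D f.hl

end PsPull



-- ===== auxiliary material for `retracts_comp` =====

section RetractsComp

abbrev J3 : Type v := ULift.{v} (Fin (2+1))

instance : WellFoundedLT J3.{v} := Finite.to_wellFoundedLT
noncomputable instance : SuccOrder J3.{v} := SuccOrder.ofLinearWellFoundedLT _

/-- Use the preorder category structure on `J3` (rather than `uliftCategory`). -/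
instance (priority := 10000) instJ3Cat : Category.{v} J3.{v} := Preorder.smallCategory _

lemma covby_j3 {a b : Fin (2+1)} (h : (a : ℕ) + 1 = b) : (⟨a⟩ : J3.{v}) ⋖ ⟨b⟩ := by
  constructor
  · show a < b; omega
  · intro c h1 h2
    have h1' : a < c.down := h1
    have h2' : c.down < b := h2
    omega

def downF : J3.{v} ⥤ Fin (2+1) where
  obj i := i.down
  map {X Y} φ := homOfLE (show X.down ≤ Y.down from @leOfHom J3 _ X Y φ)

def F3 {A B D : K} (f : A ⟶ B) (g : B ⟶ D) : J3.{v} ⥤ K :=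
  downF ⋙ (ComposableArrows.mk₂ f g)

section F3
variable {A B D : K} (f : A ⟶ B) (g : B ⟶ D)

lemma F3_map01 (φ : (⟨0⟩ : J3) ⟶ ⟨1⟩) : (F3 f g).map φ = f := rfl

lemma F3_map12 (φ : (⟨1⟩ : J3) ⟶ ⟨2⟩) : (F3 f g).map φ = g := rfl

lemma F3_map02 (φ : (⟨0⟩ : J3) ⟶ ⟨2⟩) : (F3 f g).map φ = f ≫ g := rfl

def term3 : IsTerminal (⟨2⟩ : J3.{v}) :=
  IsTerminal.ofUniqueHom
    (fun j => homOfLE (by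
      show j.down ≤ 2
      have h2 : ((2 : Fin (2+1)) : ℕ) = 2 := rfl
      rw [Fin.le_def, h2]
      omega))
    (fun _ _ => Subsingleton.elim _ _)

end F3

lemma IsCellular.comp {C : MorphismProperty K} (hC : IsCellular C)
    {A B D : K} {f : A ⟶ B} {g : B ⟶ D} (hf : C f) (hg : C g) : C (f ≫ g) := by
  apply hC.transfinite
  refine ⟨J3.{v}, inferInstance, inferInstance, inferInstance, inferInstance,
    F3 f g, coconeOfDiagramTerminal term3 (F3 f g),
    colimitOfDiagramTerminal term3 (F3 f g), Iso.refl _, Iso.refl _, ?_, ?_, ?_⟩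
  · intro j hj
    rcases j with ⟨j⟩
    fin_cases j
    · have hs : Order.succ (⟨0⟩ : J3) = ⟨1⟩ := (covby_j3 rfl).succ_eq
      have key : ∀ (jj : J3) (hjj : (⟨0⟩ : J3) ≤ jj), jj = ⟨1⟩ →
          C ((F3 f g).map (homOfLE hjj)) := by
        rintro jj hjj rfl
        rw [F3_map01]
        exact hf
      exact key _ _ hs
    · have hs : Order.succ (⟨1⟩ : J3) = ⟨2⟩ := (covby_j3 rfl).succ_eq
      have key : ∀ (jj : J3) (hjj : (⟨1⟩ : J3) ≤ jj), jj = ⟨2⟩ →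
          C ((F3 f g).map (homOfLE hjj)) := by
        rintro jj hjj rfl
        rw [F3_map12]
        exact hg
      exact key _ _ hs
    · refine absurd (fun b _ => ?_ : IsMax (⟨2⟩ : J3)) hj
      show b.down ≤ 2
      have h2 : ((2 : Fin (2+1)) : ℕ) = 2 := rfl
      rw [Fin.le_def, h2]
      omega
  · intro j hj
    rcases j with ⟨j⟩
    fin_cases j
    · refine absurd (fun b hb => ?_ : IsMin (⟨0⟩ : J3)) hj.not_isMin
      show (0 : Fin (2+1)) ≤ b.down
      have h0 : ((0 : Fin (2+1)) : ℕ) = 0 := rfl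
      rw [Fin.le_def, h0]
      omega
    · exact absurd (covby_j3 (a := 0) rfl) (hj.2 _)
    · exact absurd (covby_j3 (a := 1) rfl) (hj.2 _)
  · simp only [Iso.refl_hom, id_comp, coconeOfDiagramTerminal_ι_app]
    exact (Category.id_comp _).trans ((comp_id _).trans (F3_map02 f g _))

/-- Any retract of a morphism `g` of `C` is a retract with fixed domain of a
morphism of `C` (obtained by pushing out `g`). -/
lemma retract_fixed_domain [HasColimits K] {C : MorphismProperty K} (hC : IsCellular C)
    {A B X Y : K} {f : A ⟶ B} {g : X ⟶ Y} (hg : C g) (h : IsRetractOf f g) :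
    ∃ (P : K) (g' : A ⟶ P) (v' : B ⟶ P) (s' : P ⟶ B),
      C g' ∧ f ≫ v' = g' ∧ g' ≫ s' = f ∧ v' ≫ s' = 𝟙 B := by
  obtain ⟨u, v, r, s, h1, h2, h3, h4⟩ := h
  let P := pushout g r
  let g' : A ⟶ P := pushout.inr g r
  have hsq : IsPushout g r (pushout.inl g r) g' := IsPushout.of_hasPushout g r
  refine ⟨P, g', v ≫ pushout.inl g r, pushout.desc s f h2.symm, hC.pushout hsq hg,
    ?_, ?_, ?_⟩
  · rw [← assoc, ← h1, assoc, hsq.w, ← assoc, h3, id_comp]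
  · exact pushout.inr_desc _ _ _
  · rw [assoc, pushout.inl_desc, h4]

end RetractsComp

/-- if `C` is a cellular class on a cocomplete category, the class of
retracts of morphisms of `C` is closed under composition. -/
theorem retracts_comp {K : Type u} [Category.{v} K] [HasColimits K]
    (C : MorphismProperty K) (hC : IsCellular C)
    {A₀ A₁ A₂ : K} (f₀ : A₀ ⟶ A₁) (f₁ : A₁ ⟶ A₂)
    (h₀ : retracts C f₀) (h₁ : retracts C f₁) : retracts C (f₀ ≫ f₁) := by
  obtain ⟨X₀, Y₀, g₀', hg₀', hr₀⟩ := h₀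
  obtain ⟨X₁, Y₁, g₁', hg₁', hr₁⟩ := h₁
  obtain ⟨X, g₀, v₀, s₀, hCg₀, hv₀, hs₀, hvs₀⟩ := retract_fixed_domain hC hg₀' hr₀
  obtain ⟨Y, g₁, w, t, hCg₁, hw, ht, hwt⟩ := retract_fixed_domain hC hg₁' hr₁
  -- push out `g₁ : A₁ ⟶ Y` along `v₀ : A₁ ⟶ X`
  have hsq : IsPushout g₁ v₀ (pushout.inl g₁ v₀) (pushout.inr g₁ v₀) :=
    IsPushout.of_hasPushout g₁ v₀
  have hCh : C (pushout.inr g₁ v₀) := hC.pushout hsq hCg₁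
  have hcomp : C (g₀ ≫ pushout.inr g₁ v₀) := hC.comp hCg₀ hCh
  have hdesc : g₁ ≫ t = v₀ ≫ s₀ ≫ f₁ := by rw [ht, ← assoc, hvs₀, id_comp]
  refine ⟨A₀, pushout g₁ v₀, g₀ ≫ pushout.inr g₁ v₀, hcomp, 𝟙 A₀,
    w ≫ pushout.inl g₁ v₀, 𝟙 A₀, pushout.desc t (s₀ ≫ f₁) hdesc, ?_, ?_, by simp, ?_⟩
  · calc 𝟙 A₀ ≫ g₀ ≫ pushout.inr g₁ v₀ = (f₀ ≫ v₀) ≫ pushout.inr g₁ v₀ := by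
          rw [hv₀, id_comp]
      _ = f₀ ≫ g₁ ≫ pushout.inl g₁ v₀ := by rw [assoc, pushout.condition]
      _ = (f₀ ≫ f₁) ≫ w ≫ pushout.inl g₁ v₀ := by rw [← hw]; simp only [assoc]
  · calc 𝟙 A₀ ≫ f₀ ≫ f₁ = (g₀ ≫ s₀) ≫ f₁ := by rw [hs₀, id_comp]
      _ = g₀ ≫ pushout.inr g₁ v₀ ≫ pushout.desc t (s₀ ≫ f₁) hdesc := by
          rw [pushout.inr_desc, assoc]
      _ = (g₀ ≫ pushout.inr g₁ v₀) ≫ pushout.desc t (s₀ ≫ f₁) hdesc := by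
          rw [assoc]
  · rw [assoc, pushout.inl_desc, hwt]
end CellularPaper
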